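/- arXiv:1207.5422 — 2 statements merged into one kernel-verified Lean document; each statement's English description precedes it below -/
import Mathlib

section
/- Let f : [a,b] → ℝ be differentiable with f' integrable, a < b, q ≥ 1, and |f'|^q convex on [a,b]. Then |(1/6)[f(a) + 4f((a+b)/2) + f(b)] - (1/(b-a)) ∫_a^b f(x) dx| ≤ (b-a)(5/72)^{1-1/q} [ ((29/648)|f'((a+b)/2)|^q + (2/81)|f'(a)|^q)^{1/q} + ((29/648)|f'((a+b)/2)|^q + (2/81)|f'(b)|^q)^{1/q} ]. -/
open MeasureTheory intervalIntegral Set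

lemma memLp_ofReal_of_integrable_rpow {α : Type*} [MeasurableSpace α] {μ : Measure α}
    {r : ℝ} (hr : 0 < r) {h : α → ℝ} (hm : AEStronglyMeasurable h μ)
    (hi : Integrable (fun x => ‖h x‖ ^ r) μ) : MemLp h (ENNReal.ofReal r) μ := by
  have h0 : ENNReal.ofReal r ≠ 0 := by simp [ENNReal.ofReal_eq_zero, not_le, hr]
  have htop : ENNReal.ofReal r ≠ ⊤ := ENNReal.ofReal_ne_top
  have := (memLp_norm_rpow_iff (p := ENNReal.ofReal r) (q := ENNReal.ofReal r) hm h0 htop).1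
  apply this
  rw [ENNReal.div_self h0 htop, ENNReal.toReal_ofReal hr.le, memLp_one_iff_integrable]
  exact hi

lemma weighted_power_mean {α : Type*} [MeasurableSpace α] (μ : Measure α)
    {q : ℝ} (hq : 1 ≤ q) {w g : α → ℝ}
    (hwnn : 0 ≤ᵐ[μ] w) (hgnn : 0 ≤ᵐ[μ] g)
    (hw : AEStronglyMeasurable w μ) (hg : AEStronglyMeasurable g μ)
    (hwi : Integrable w μ) (hwgq : Integrable (fun x => w x * g x ^ q) μ) :
    ∫ x, w x * g x ∂μ ≤ (∫ x, w x ∂μ) ^ (1 - 1/q) * (∫ x, w x * g x ^ q ∂μ) ^ (1/q) := by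
  rcases eq_or_lt_of_le hq with hq1 | hq1
  · subst hq1
    norm_num
  · set p := q.conjExponent with hp
    have hpq : p.HolderConjugate q := (Real.HolderConjugate.conjExponent hq1).symm
    have hq0 : (0:ℝ) < q := lt_trans one_pos hq1
    have hp0 : (0:ℝ) < p := hpq.pos
    have hsum : 1/p + 1/q = (1:ℝ) := by rw [one_div, one_div]; exact hpq.inv_add_inv_eq_one
    have hFm : AEStronglyMeasurable (fun x => w x ^ (1/p)) μ :=
      (hw.aemeasurable.pow aemeasurable_const).aestronglyMeasurable
    have hGm : AEStronglyMeasurable (fun x => w x ^ (1/q) * g x) μ :=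
      ((hw.aemeasurable.pow aemeasurable_const).mul hg.aemeasurable).aestronglyMeasurable
    have hF : MemLp (fun x => w x ^ (1/p)) (ENNReal.ofReal p) μ := by
      refine memLp_ofReal_of_integrable_rpow hp0 hFm ?_
      refine hwi.congr ?_
      filter_upwards [hwnn] with x hx
      rw [Real.norm_eq_abs, abs_of_nonneg (Real.rpow_nonneg hx _),
        ← Real.rpow_mul hx, one_div_mul_cancel hp0.ne', Real.rpow_one]
    have hG : MemLp (fun x => w x ^ (1/q) * g x) (ENNReal.ofReal q) μ := by
      refine memLp_ofReal_of_integrable_rpow hq0 hGm ?_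
      refine hwgq.congr ?_
      filter_upwards [hwnn, hgnn] with x hxw hxg
      rw [Real.norm_eq_abs, abs_of_nonneg (mul_nonneg (Real.rpow_nonneg hxw _) hxg),
        Real.mul_rpow (Real.rpow_nonneg hxw _) hxg, ← Real.rpow_mul hxw,
        one_div_mul_cancel hq0.ne', Real.rpow_one]
    have key := integral_mul_le_Lp_mul_Lq_of_nonneg hpq
      (f := fun x => w x ^ (1/p)) (g := fun x => w x ^ (1/q) * g x)
      (hwnn.mono fun x hx => Real.rpow_nonneg hx _)
      (hwnn.mp (hgnn.mono fun x hxg hxw => mul_nonneg (Real.rpow_nonneg hxw _) hxg))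
      hF hG
    have e1 : ∫ x, (w x ^ (1/p)) * (w x ^ (1/q) * g x) ∂μ = ∫ x, w x * g x ∂μ := by
      refine integral_congr_ae ?_
      filter_upwards [hwnn] with x hx
      rw [← mul_assoc, ← Real.rpow_add' hx (by rw [hsum]; norm_num), hsum, Real.rpow_one]
    have e2 : ∫ x, (w x ^ (1/p)) ^ p ∂μ = ∫ x, w x ∂μ := by
      refine integral_congr_ae ?_
      filter_upwards [hwnn] with x hx
      rw [← Real.rpow_mul hx, one_div_mul_cancel hp0.ne', Real.rpow_one]
    have e3 : ∫ x, (w x ^ (1/q) * g x) ^ q ∂μ = ∫ x, w x * g x ^ q ∂μ := by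
      refine integral_congr_ae ?_
      filter_upwards [hwnn, hgnn] with x hxw hxg
      rw [Real.mul_rpow (Real.rpow_nonneg hxw _) hxg, ← Real.rpow_mul hxw,
        one_div_mul_cancel hq0.ne', Real.rpow_one]
    have honesub : 1 - 1/q = 1/p := by
      rw [one_div, one_div]; exact hpq.symm.one_sub_inv
    rw [honesub]
    rw [e1, e2, e3] at key
    exact key

lemma half_est (f : ℝ → ℝ) {q a b : ℝ} (hq : 1 ≤ q) (u v c : ℝ)
    (huv : u < v) (hsub : Set.Icc u v ⊆ Set.Icc a b)
    (hcu : u ≤ c) (hcv : c ≤ v)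
    (hconv : ConvexOn ℝ (Set.Icc a b) (fun x => |deriv f x| ^ q))
    (hint : IntervalIntegrable (deriv f) volume u v) :
    ∫ x in u..v, |x - c| * |deriv f x| ≤
      (∫ x in u..v, |x - c|) ^ (1 - 1/q) *
      (∫ x in u..v, |x - c| *
        (((v - x) * |deriv f u| ^ q + (x - u) * |deriv f v| ^ q) / (v - u))) ^ (1/q) := by
  have hvu : (0:ℝ) < v - u := by linarith
  set μ := volume.restrict (Set.Ioc u v) with hμ
  haveI : IsFiniteMeasure μ := ⟨by
    rw [hμ, Measure.restrict_apply_univ]; exact measure_Ioc_lt_top⟩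
  set w : ℝ → ℝ := fun x => |x - c| with hw
  set g : ℝ → ℝ := fun x => |deriv f x| with hg
  set Gu := |deriv f u| ^ q with hGu
  set Gv := |deriv f v| ^ q with hGv
  set ℓ : ℝ → ℝ := fun x => ((v - x) * Gu + (x - u) * Gv) / (v - u) with hℓ
  have hGu0 : 0 ≤ Gu := Real.rpow_nonneg (abs_nonneg _) _
  have hGv0 : 0 ≤ Gv := Real.rpow_nonneg (abs_nonneg _) _
  have hwc : Continuous w := (continuous_id.sub continuous_const).abs
  have hℓc : Continuous ℓ :=
    (((continuous_const.sub continuous_id).mul continuous_const).add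
      ((continuous_id.sub continuous_const).mul continuous_const)).div_const _
  have hgm : Measurable g := (measurable_deriv f).abs
  have hchord : ∀ x ∈ Set.Icc u v, g x ^ q ≤ ℓ x := by
    intro x hx
    have hu' : u ∈ Set.Icc a b := hsub ⟨le_refl u, huv.le⟩
    have hv' : v ∈ Set.Icc a b := hsub ⟨huv.le, le_refl v⟩
    have h1 : (0:ℝ) ≤ (v - x)/(v - u) := by
      apply div_nonneg _ hvu.le; linarith [hx.2]
    have h2 : (0:ℝ) ≤ (x - u)/(v - u) := by
      apply div_nonneg _ hvu.le; linarith [hx.1]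
    have h3 : (v - x)/(v - u) + (x - u)/(v - u) = 1 := by
      field_simp
      ring
    have h4 : ((v - x)/(v - u)) • u + ((x - u)/(v - u)) • v = x := by
      simp only [smul_eq_mul]; field_simp; ring
    have := hconv.2 hu' hv' h1 h2 h3
    rw [h4] at this
    calc g x ^ q ≤ ((v - x)/(v - u)) * Gu + ((x - u)/(v - u)) * Gv := this
      _ = ℓ x := by rw [hℓ]; ring
  have hℓ_le : ∀ x ∈ Set.Icc u v, ℓ x ≤ Gu + Gv := by
    intro x hx
    rw [hℓ, div_le_iff₀ hvu]
    nlinarith [hx.1, hx.2]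
  have hw_bdd : ∀ x ∈ Set.Ioc u v, |w x| ≤ v - u := by
    intro x hx
    rw [hw, abs_abs, abs_le]
    constructor <;> [linarith [hx.1.le, hcv]; linarith [hx.2, hcu]]
  have hwnn : (0:ℝ→ℝ) ≤ᵐ[μ] w := Filter.Eventually.of_forall fun x => abs_nonneg _
  have hgnn : (0:ℝ→ℝ) ≤ᵐ[μ] g := Filter.Eventually.of_forall fun x => abs_nonneg _
  have hwi : Integrable w μ := (hwc.integrableOn_Ioc)
  have hgi : Integrable g μ := (hint.1).abs
  have hwgq : Integrable (fun x => w x * g x ^ q) μ := by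
    refine Integrable.mono' (integrable_const ((v - u) * (Gu + Gv)))
      ((hwc.measurable.mul (hgm.pow measurable_const)).aestronglyMeasurable) ?_
    filter_upwards [ae_restrict_mem measurableSet_Ioc] with x hx
    have hxI : x ∈ Set.Icc u v := ⟨hx.1.le, hx.2⟩
    have h1 : g x ^ q ≤ Gu + Gv := (hchord x hxI).trans (hℓ_le x hxI)
    have h2 : (0:ℝ) ≤ g x ^ q := Real.rpow_nonneg (abs_nonneg _) _
    rw [Real.norm_eq_abs, abs_of_nonneg (mul_nonneg (abs_nonneg _) h2)]
    have := hw_bdd x hx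
    rw [abs_abs] at this
    exact mul_le_mul this h1 h2 (by linarith)
  have hold := weighted_power_mean μ hq hwnn hgnn hwc.aestronglyMeasurable
    hgm.aestronglyMeasurable hwi hwgq
  have hmono : ∫ x, w x * g x ^ q ∂μ ≤ ∫ x, w x * ℓ x ∂μ := by
    refine setIntegral_mono_on hwgq ((hwc.mul hℓc).integrableOn_Ioc) measurableSet_Ioc ?_
    intro x hx
    have hxI : x ∈ Set.Icc u v := ⟨hx.1.le, hx.2⟩
    exact mul_le_mul_of_nonneg_left (hchord x hxI) (abs_nonneg _)
  have h2nn : 0 ≤ ∫ x, w x * g x ^ q ∂μ := by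
    refine integral_nonneg fun x => mul_nonneg (abs_nonneg _) (Real.rpow_nonneg (abs_nonneg _) _)
  have hq0 : (0:ℝ) < q := lt_of_lt_of_le one_pos hq
  have final : (∫ x, w x * g x ^ q ∂μ) ^ (1/q) ≤ (∫ x, w x * ℓ x ∂μ) ^ (1/q) :=
    Real.rpow_le_rpow h2nn hmono (by positivity)
  have h1nn : 0 ≤ (∫ x, w x ∂μ) ^ (1 - 1/q) :=
    Real.rpow_nonneg (integral_nonneg fun x => abs_nonneg _) _
  rw [intervalIntegral.integral_of_le huv.le, intervalIntegral.integral_of_le huv.le,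
    intervalIntegral.integral_of_le huv.le]
  exact hold.trans (mul_le_mul_of_nonneg_left final h1nn)

lemma integral_poly3 (p0 p1 p2 p3 u v : ℝ) :
    ∫ x in u..v, (p0 + p1 * x + p2 * x^2 + p3 * x^3) =
      p0*(v-u) + p1*(v^2-u^2)/2 + p2*(v^3-u^3)/3 + p3*(v^4-u^4)/4 := by
  have c0 : Continuous (fun x : ℝ => p0 + p1 * x) :=
    continuous_const.add (continuous_const.mul continuous_id)
  have c2 : Continuous (fun x : ℝ => p2 * x^2) := continuous_const.mul (continuous_pow 2)
  have c3 : Continuous (fun x : ℝ => p3 * x^3) := continuous_const.mul (continuous_pow 3)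
  have c1 : IntervalIntegrable (fun x : ℝ => p1 * x) volume u v :=
    (continuous_const.mul continuous_id).intervalIntegrable u v
  rw [intervalIntegral.integral_add (f := fun x => p0 + p1 * x + p2 * x^2) (g := fun x => p3 * x^3) ((c0.add c2).intervalIntegrable u v) (c3.intervalIntegrable u v),
    intervalIntegral.integral_add (c0.intervalIntegrable u v) (c2.intervalIntegrable u v),
    intervalIntegral.integral_add (intervalIntegrable_const) c1,
    intervalIntegral.integral_const, intervalIntegral.integral_const_mul,
    intervalIntegral.integral_const_mul, intervalIntegral.integral_const_mul,
    integral_id, integral_pow, integral_pow, smul_eq_mul]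
  push_cast
  ring

lemma integral_abs_poly (u v c p0 p1 p2 : ℝ) (hcu : u ≤ c) (hcv : c ≤ v) :
    ∫ x in u..v, |x - c| * (p0 + p1*x + p2*x^2)
      = 2*(c*p0*c + (c*p1 - p0)*c^2/2 + (c*p2 - p1)*c^3/3 - p2*c^4/4)
        - (c*p0*u + (c*p1 - p0)*u^2/2 + (c*p2 - p1)*u^3/3 - p2*u^4/4)
        - (c*p0*v + (c*p1 - p0)*v^2/2 + (c*p2 - p1)*v^3/3 - p2*v^4/4) := by
  have hcont : Continuous (fun x : ℝ => |x - c| * (p0 + p1*x + p2*x^2)) := by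
    apply Continuous.mul (continuous_id.sub continuous_const).abs
    continuity
  rw [← intervalIntegral.integral_add_adjacent_intervals
    (hcont.intervalIntegrable u c) (hcont.intervalIntegrable c v)]
  have e1 : ∫ x in u..c, |x - c| * (p0 + p1*x + p2*x^2)
      = ∫ x in u..c, (c*p0 + (c*p1 - p0)*x + (c*p2 - p1)*x^2 + (-p2)*x^3) := by
    refine intervalIntegral.integral_congr fun x hx => ?_
    rw [Set.uIcc_of_le hcu] at hx
    rw [abs_of_nonpos (by linarith [hx.2])]
    ring
  have e2 : ∫ x in c..v, |x - c| * (p0 + p1*x + p2*x^2)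
      = ∫ x in c..v, (-(c*p0) + (p0 - c*p1)*x + (p1 - c*p2)*x^2 + p2*x^3) := by
    refine intervalIntegral.integral_congr fun x hx => ?_
    rw [Set.uIcc_of_le hcv] at hx
    rw [abs_of_nonneg (by linarith [hx.1])]
    ring
  rw [e1, e2, integral_poly3, integral_poly3]
  ring

lemma ibp_kernel (f : ℝ → ℝ) (a b u v c : ℝ)
    (hsub : Set.uIcc u v ⊆ Set.Icc a b)
    (hf : ∀ x ∈ Set.Icc a b, DifferentiableAt ℝ f x)
    (hint : IntervalIntegrable (deriv f) volume u v) :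
    ∫ x in u..v, (x - c) * deriv f x
      = (v - c) * f v - (u - c) * f u - ∫ x in u..v, f x := by
  have := intervalIntegral.integral_mul_deriv_eq_deriv_mul
    (u := fun x => x - c) (u' := fun _ => (1:ℝ)) (v := f) (v' := deriv f)
    (fun x hx => (hasDerivAt_id x).sub_const c)
    (fun x hx => (hf x (hsub hx)).hasDerivAt)
    (intervalIntegrable_const) hint (a := u) (b := v)
  rw [this]
  simp

set_option maxHeartbeats 1000000 in
lemma evalW1 (a b : ℝ) (hab : a < b) :
    ∫ x in a..((a+b)/2), |x - (5*a+b)/6| = 5/72 * (b-a)^2 := by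
  have hac : a ≤ (5*a+b)/6 := by linarith
  have hcm : (5*a+b)/6 ≤ (a+b)/2 := by linarith
  have e : ∫ x in a..((a+b)/2), |x - (5*a+b)/6|
      = ∫ x in a..((a+b)/2), |x - (5*a+b)/6| * (1 + 0*x + 0*x^2) :=
    intervalIntegral.integral_congr fun x _ => by ring
  rw [e, integral_abs_poly a ((a+b)/2) ((5*a+b)/6) 1 0 0 hac hcm]; ring

set_option maxHeartbeats 1000000 in
lemma evalW2 (a b : ℝ) (hab : a < b) :
    ∫ x in ((a+b)/2)..b, |x - (a+5*b)/6| = 5/72 * (b-a)^2 := by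
  have hmc : (a+b)/2 ≤ (a+5*b)/6 := by linarith
  have hcb : (a+5*b)/6 ≤ b := by linarith
  have e : ∫ x in ((a+b)/2)..b, |x - (a+5*b)/6|
      = ∫ x in ((a+b)/2)..b, |x - (a+5*b)/6| * (1 + 0*x + 0*x^2) :=
    intervalIntegral.integral_congr fun x _ => by ring
  rw [e, integral_abs_poly ((a+b)/2) b ((a+5*b)/6) 1 0 0 hmc hcb]; ring

set_option maxHeartbeats 1000000 in
lemma evalM1 (a b Ga Gm : ℝ) (hab : a < b) :
    ∫ x in a..((a+b)/2), |x - (5*a+b)/6| *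
        ((((a+b)/2 - x) * Ga + (x - a) * Gm) / ((a+b)/2 - a))
      = (29/648 * Gm + 2/81 * Ga) * (b-a)^2 := by
  have hba : b - a ≠ 0 := by intro h; linarith
  have hac : a ≤ (5*a+b)/6 := by linarith
  have hcm : (5*a+b)/6 ≤ (a+b)/2 := by linarith
  have e : ∫ x in a..((a+b)/2), |x - (5*a+b)/6| *
        ((((a+b)/2 - x) * Ga + (x - a) * Gm) / ((a+b)/2 - a))
      = ∫ x in a..((a+b)/2), |x - (5*a+b)/6| *
        ((((a+b)*Ga - 2*a*Gm)/(b-a)) + ((2*Gm - 2*Ga)/(b-a))*x + 0*x^2) := by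
    refine intervalIntegral.integral_congr fun x _ => ?_
    have h : (((a+b)/2 - x) * Ga + (x - a) * Gm) / ((a+b)/2 - a)
        = (((a+b)*Ga - 2*a*Gm)/(b-a)) + ((2*Gm - 2*Ga)/(b-a))*x + 0*x^2 := by
      rw [show (a+b)/2 - a = (b-a)/2 by ring]
      field_simp
      ring
    rw [h]
  rw [e, integral_abs_poly a ((a+b)/2) ((5*a+b)/6) (((a+b)*Ga - 2*a*Gm)/(b-a))
    ((2*Gm - 2*Ga)/(b-a)) 0 hac hcm]
  field_simp
  ring

set_option maxHeartbeats 1000000 in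
lemma evalM2 (a b Gm Gb : ℝ) (hab : a < b) :
    ∫ x in ((a+b)/2)..b, |x - (a+5*b)/6| *
        (((b - x) * Gm + (x - (a+b)/2) * Gb) / (b - (a+b)/2))
      = (29/648 * Gm + 2/81 * Gb) * (b-a)^2 := by
  have hba : b - a ≠ 0 := by intro h; linarith
  have hmc : (a+b)/2 ≤ (a+5*b)/6 := by linarith
  have hcb : (a+5*b)/6 ≤ b := by linarith
  have e : ∫ x in ((a+b)/2)..b, |x - (a+5*b)/6| *
        (((b - x) * Gm + (x - (a+b)/2) * Gb) / (b - (a+b)/2))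
      = ∫ x in ((a+b)/2)..b, |x - (a+5*b)/6| *
        (((2*b*Gm - (a+b)*Gb)/(b-a)) + ((2*Gb - 2*Gm)/(b-a))*x + 0*x^2) := by
    refine intervalIntegral.integral_congr fun x _ => ?_
    have h : ((b - x) * Gm + (x - (a+b)/2) * Gb) / (b - (a+b)/2)
        = ((2*b*Gm - (a+b)*Gb)/(b-a)) + ((2*Gb - 2*Gm)/(b-a))*x + 0*x^2 := by
      rw [show b - (a+b)/2 = (b-a)/2 by ring]
      field_simp
      ring
    rw [h]
  rw [e, integral_abs_poly ((a+b)/2) b ((a+5*b)/6) ((2*b*Gm - (a+b)*Gb)/(b-a))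
    ((2*Gb - 2*Gm)/(b-a)) 0 hmc hcb]
  field_simp
  ring

theorem stmt10 (f : ℝ → ℝ) (a b q : ℝ) (hab : a < b) (hq : 1 ≤ q)
    (hf : ∀ x ∈ Set.Icc a b, DifferentiableAt ℝ f x)
    (hint : IntervalIntegrable (deriv f) volume a b)
    (hconv : ConvexOn ℝ (Set.Icc a b) (fun x => |deriv f x| ^ q)) :
    |(1/6) * (f a + 4 * f ((a + b) / 2) + f b) - (1 / (b - a)) * ∫ x in a..b, f x|
      ≤ (b - a) * (5/72 : ℝ) ^ (1 - 1 / q) *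
        (((29/648) * |deriv f ((a + b) / 2)| ^ q + (2/81) * |deriv f a| ^ q) ^ (1 / q)
          + ((29/648) * |deriv f ((a + b) / 2)| ^ q
            + (2/81) * |deriv f b| ^ q) ^ (1 / q)) := by
  have hL : (0:ℝ) < b - a := by linarith
  set m : ℝ := (a + b) / 2 with hm
  set c₁ : ℝ := (5*a + b) / 6 with hc₁
  set c₂ : ℝ := (a + 5*b) / 6 with hc₂
  have ham : a < m := by rw [hm]; linarith
  have hmb : m < b := by rw [hm]; linarith
  have hac₁ : a ≤ c₁ := by rw [hc₁]; linarith
  have hc₁m : c₁ ≤ m := by rw [hc₁, hm]; linarith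
  have hmc₂ : m ≤ c₂ := by rw [hc₂, hm]; linarith
  have hc₂b : c₂ ≤ b := by rw [hc₂]; linarith
  have hsub1 : Set.Icc a m ⊆ Set.Icc a b := Set.Icc_subset_Icc le_rfl hmb.le
  have hsub2 : Set.Icc m b ⊆ Set.Icc a b := Set.Icc_subset_Icc ham.le le_rfl
  have hint1 : IntervalIntegrable (deriv f) volume a m := by
    refine hint.mono_set ?_
    rw [Set.uIcc_of_le ham.le, Set.uIcc_of_le hab.le]
    exact hsub1
  have hint2 : IntervalIntegrable (deriv f) volume m b := by
    refine hint.mono_set ?_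
    rw [Set.uIcc_of_le hmb.le, Set.uIcc_of_le hab.le]
    exact hsub2
  have hfc : ContinuousOn f (Set.Icc a b) :=
    fun x hx => (hf x hx).continuousAt.continuousWithinAt
  have hfi1 : IntervalIntegrable f volume a m := by
    apply ContinuousOn.intervalIntegrable
    rw [Set.uIcc_of_le ham.le]; exact hfc.mono hsub1
  have hfi2 : IntervalIntegrable f volume m b := by
    apply ContinuousOn.intervalIntegrable
    rw [Set.uIcc_of_le hmb.le]; exact hfc.mono hsub2
  have hadd : (∫ x in a..m, f x) + ∫ x in m..b, f x = ∫ x in a..b, f x :=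
    intervalIntegral.integral_add_adjacent_intervals hfi1 hfi2
  set J₁ : ℝ := ∫ x in a..m, (x - c₁) * deriv f x with hJ₁
  set J₂ : ℝ := ∫ x in m..b, (x - c₂) * deriv f x with hJ₂
  have I₁ : J₁ = (m - c₁) * f m - (a - c₁) * f a - ∫ x in a..m, f x := by
    rw [hJ₁]
    exact ibp_kernel f a b a m c₁ (by rw [Set.uIcc_of_le ham.le]; exact hsub1) hf hint1
  have I₂ : J₂ = (b - c₂) * f b - (m - c₂) * f m - ∫ x in m..b, f x := by
    rw [hJ₂]
    exact ibp_kernel f a b m b c₂ (by rw [Set.uIcc_of_le hmb.le]; exact hsub2) hf hint2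
  have hid : (1/6) * (f a + 4 * f m + f b) - (1 / (b - a)) * ∫ x in a..b, f x
      = (1/(b - a)) * (J₁ + J₂) := by
    rw [I₁, I₂, ← hadd]
    have e1 : m - c₁ = (b-a)/3 := by rw [hm, hc₁]; ring
    have e2 : a - c₁ = -((b-a)/6) := by rw [hc₁]; ring
    have e3 : b - c₂ = (b-a)/6 := by rw [hc₂]; ring
    have e4 : m - c₂ = -((b-a)/3) := by rw [hm, hc₂]; ring
    rw [e1, e2, e3, e4]
    field_simp
    ring
  set Ga := |deriv f a| ^ q with hGa
  set Gm := |deriv f m| ^ q with hGm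
  set Gb := |deriv f b| ^ q with hGb
  have hGa0 : 0 ≤ Ga := Real.rpow_nonneg (abs_nonneg _) _
  have hGm0 : 0 ≤ Gm := Real.rpow_nonneg (abs_nonneg _) _
  have hGb0 : 0 ≤ Gb := Real.rpow_nonneg (abs_nonneg _) _
  have hba : b - a ≠ 0 := hL.ne'
  have habs1 : |J₁| ≤ ∫ x in a..m, |x - c₁| * |deriv f x| := by
    refine (intervalIntegral.abs_integral_le_integral_abs ham.le).trans_eq ?_
    exact intervalIntegral.integral_congr fun x _ => abs_mul _ _
  have habs2 : |J₂| ≤ ∫ x in m..b, |x - c₂| * |deriv f x| := by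
    refine (intervalIntegral.abs_integral_le_integral_abs hmb.le).trans_eq ?_
    exact intervalIntegral.integral_congr fun x _ => abs_mul _ _
  have H1 := half_est f hq a m c₁ ham hsub1 hac₁ hc₁m hconv hint1
  have H2 := half_est f hq m b c₂ hmb hsub2 hmc₂ hc₂b hconv hint2
  have W1 : ∫ x in a..m, |x - c₁| = 5/72 * (b-a)^2 := by
    rw [hm, hc₁]; exact evalW1 a b hab
  have W2 : ∫ x in m..b, |x - c₂| = 5/72 * (b-a)^2 := by
    rw [hm, hc₂]; exact evalW2 a b hab
  have M1 : ∫ x in a..m, |x - c₁| * (((m - x) * Ga + (x - a) * Gm) / (m - a))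
      = (29/648 * Gm + 2/81 * Ga) * (b-a)^2 := by
    rw [hm, hc₁]; exact evalM1 a b Ga Gm hab
  have M2 : ∫ x in m..b, |x - c₂| * (((b - x) * Gm + (x - m) * Gb) / (b - m))
      = (29/648 * Gm + 2/81 * Gb) * (b-a)^2 := by
    rw [hm, hc₂]; exact evalM2 a b Gm Gb hab
  rw [W1, M1] at H1
  rw [W2, M2] at H2
  have key1 : |J₁| ≤ (5/72*(b-a)^2)^(1-1/q) * ((29/648 * Gm + 2/81 * Ga)*(b-a)^2)^(1/q) :=
    habs1.trans H1
  have key2 : |J₂| ≤ (5/72*(b-a)^2)^(1-1/q) * ((29/648 * Gm + 2/81 * Gb)*(b-a)^2)^(1/q) :=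
    habs2.trans H2
  rw [hid, abs_mul, abs_of_pos (by positivity : (0:ℝ) < 1/(b-a))]
  have step : 1/(b-a) * |J₁ + J₂| ≤ 1/(b-a) * (|J₁| + |J₂|) :=
    mul_le_mul_of_nonneg_left (abs_add_le _ _) (by positivity)
  refine step.trans ?_
  have step2 : |J₁| + |J₂| ≤
      (5/72*(b-a)^2)^(1-1/q) * ((29/648 * Gm + 2/81 * Ga)*(b-a)^2)^(1/q)
      + (5/72*(b-a)^2)^(1-1/q) * ((29/648 * Gm + 2/81 * Gb)*(b-a)^2)^(1/q) :=
    add_le_add key1 key2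
  refine (mul_le_mul_of_nonneg_left step2 (by positivity : (0:ℝ) ≤ 1/(b-a))).trans_eq ?_
  have hL2 : (0:ℝ) < (b-a)^2 := by positivity
  have hA1 : (0:ℝ) ≤ 29/648 * Gm + 2/81 * Ga := by positivity
  have hA2 : (0:ℝ) ≤ 29/648 * Gm + 2/81 * Gb := by positivity
  have r1 : ((5:ℝ)/72*(b-a)^2)^(1-1/q) = (5/72:ℝ)^(1-1/q) * ((b-a)^2)^(1-1/q) :=
    Real.mul_rpow (by norm_num) hL2.le
  have r2 : ((29/648 * Gm + 2/81 * Ga)*(b-a)^2)^(1/q)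
      = (29/648 * Gm + 2/81 * Ga)^(1/q) * ((b-a)^2)^(1/q) := Real.mul_rpow hA1 hL2.le
  have r3 : ((29/648 * Gm + 2/81 * Gb)*(b-a)^2)^(1/q)
      = (29/648 * Gm + 2/81 * Gb)^(1/q) * ((b-a)^2)^(1/q) := Real.mul_rpow hA2 hL2.le
  have r4 : ((b-a)^2)^((1:ℝ)-1/q) * ((b-a)^2)^((1:ℝ)/q) = (b-a)^2 := by
    rw [← Real.rpow_add hL2, sub_add_cancel, Real.rpow_one]
  calc 1/(b-a) * ((5/72*(b-a)^2)^(1-1/q) * ((29/648 * Gm + 2/81 * Ga)*(b-a)^2)^(1/q)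
        + (5/72*(b-a)^2)^(1-1/q) * ((29/648 * Gm + 2/81 * Gb)*(b-a)^2)^(1/q))
      = 1/(b-a) * ((5/72:ℝ)^(1-1/q) * (((b-a)^2)^((1:ℝ)-1/q) * ((b-a)^2)^((1:ℝ)/q)) *
          ((29/648 * Gm + 2/81 * Ga)^(1/q) + (29/648 * Gm + 2/81 * Gb)^(1/q))) := by
        rw [r1, r2, r3]; ring
    _ = (b - a) * (5/72:ℝ)^(1-1/q) *
          ((29/648 * Gm + 2/81 * Ga)^(1/q) + (29/648 * Gm + 2/81 * Gb)^(1/q)) := by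
        rw [r4]; field_simp
end

section
/- Let f : [a,b] → ℝ be differentiable with f' integrable, a < b, q > 1, p = q/(q-1), and |f'|^q convex on [a,b]. Then |(1/6)[f(a) + 4f((a+b)/2) + f(b)] - (1/(b-a)) ∫_a^b f(x) dx| ≤ ((b-a)/12)((1 + 2^{p+1})/(3(p+1)))^{1/p} [ ((|f'((a+b)/2)|^q + |f'(a)|^q)/2)^{1/q} + ((|f'((a+b)/2)|^q + |f'(b)|^q)/2)^{1/q} ]. -/
open MeasureTheory intervalIntegral Set



/-- Trapezoid estimate for a convex function. -/
lemma my_trapezoid {g : ℝ → ℝ} {u v : ℝ} (huv : u < v) (hconv : ConvexOn ℝ (Icc u v) g)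
    (hg : IntervalIntegrable g volume u v) :
    ∫ x in u..v, g x ≤ (v - u) * ((g u + g v) / 2) := by
  have hvu : (0:ℝ) < v - u := by linarith
  set c : ℝ := (g v - g u) / (v - u) with hc
  have hpt : ∀ x ∈ Icc u v, g x ≤ g u + c * (x - u) := by
    intro x hx
    obtain ⟨hx1, hx2⟩ := hx
    set t : ℝ := (x - u) / (v - u) with ht
    have ht0 : 0 ≤ t := div_nonneg (by linarith) hvu.le
    have ht1 : t ≤ 1 := by rw [ht, div_le_one hvu]; linarith
    have hx' : x = (1 - t) * u + t * v := by
      rw [ht]; field_simp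
      ring
    have := hconv.2 (left_mem_Icc.2 huv.le) (right_mem_Icc.2 huv.le)
      (by linarith : (0:ℝ) ≤ 1 - t) ht0 (by ring)
    simp only [smul_eq_mul] at this
    rw [← hx'] at this
    have hct : c * (x - u) = t * (g v - g u) := by
      rw [hc, ht]; field_simp
    calc g x ≤ (1 - t) * g u + t * g v := this
      _ = g u + t * (g v - g u) := by ring
      _ = g u + c * (x - u) := by rw [hct]
  have hcont : Continuous fun x : ℝ => g u + c * (x - u) := by continuity
  have hupper : ∫ x in u..v, (g u + c * (x - u)) = (v - u) * ((g u + g v) / 2) := by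
    have : ∀ x ∈ uIcc u v, HasDerivAt (fun y => g u * y + c / 2 * (y - u) ^ 2)
        (g u + c * (x - u)) x := by
      intro x _
      have h1 : HasDerivAt (fun y : ℝ => g u * y) (g u) x := by
        simpa using (hasDerivAt_id x).const_mul (g u)
      have h2 : HasDerivAt (fun y : ℝ => c / 2 * (y - u) ^ 2) (c / 2 * (2 * (x - u))) x := by
        exact (((hasDerivAt_id x).sub_const u).pow 2).const_mul (c / 2) |>.congr_deriv (by simp only [id_eq]; ring)
      exact (h1.add h2).congr_deriv (by ring)
    rw [integral_eq_sub_of_hasDerivAt this (hcont.intervalIntegrable u v)]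
    rw [hc]; field_simp; ring
  calc ∫ x in u..v, g x ≤ ∫ x in u..v, (g u + c * (x - u)) := by
        apply intervalIntegral.integral_mono_on huv.le hg (hcont.intervalIntegrable u v)
        intro x hx; exact hpt x hx
    _ = (v - u) * ((g u + g v) / 2) := hupper


lemma my_kernel_int {u v c p : ℝ} (h1 : u ≤ c) (h2 : c ≤ v) (hp : 0 < p) :
    ∫ x in u..v, |x - c| ^ p = ((c - u) ^ (p + 1) + (v - c) ^ (p + 1)) / (p + 1) := by
  have hcont : Continuous fun x : ℝ => |x - c| ^ p :=
    (continuous_abs.comp (continuous_id.sub continuous_const)).rpow_const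
      (fun x => Or.inr hp.le)
  have hsplit : ∫ x in u..v, |x - c| ^ p
      = (∫ x in u..c, |x - c| ^ p) + ∫ x in c..v, |x - c| ^ p :=
    (integral_add_adjacent_intervals (hcont.intervalIntegrable u c)
      (hcont.intervalIntegrable c v)).symm
  have e1 : ∫ x in u..c, |x - c| ^ p = (c - u) ^ (p + 1) / (p + 1) := by
    have : ∫ x in u..c, |x - c| ^ p = ∫ x in u..c, (c - x) ^ p := by
      apply intervalIntegral.integral_congr
      intro x hx
      rw [uIcc_of_le h1] at hx
      simp only []; rw [abs_of_nonpos (by linarith [hx.2] : x - c ≤ 0), neg_sub]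
    rw [this, intervalIntegral.integral_comp_sub_left (fun x => x ^ p) c, sub_self,
      integral_rpow (Or.inl (by linarith)), Real.zero_rpow (by linarith), sub_zero]
  have e2 : ∫ x in c..v, |x - c| ^ p = (v - c) ^ (p + 1) / (p + 1) := by
    have : ∫ x in c..v, |x - c| ^ p = ∫ x in c..v, (x - c) ^ p := by
      apply intervalIntegral.integral_congr
      intro x hx
      rw [uIcc_of_le h2] at hx
      simp only []; rw [abs_of_nonneg (by linarith [hx.1] : (0:ℝ) ≤ x - c)]
    rw [this, intervalIntegral.integral_comp_sub_right (fun x => x ^ p) c, sub_self,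
      integral_rpow (Or.inl (by linarith)), Real.zero_rpow (by linarith), sub_zero]
  rw [hsplit, e1, e2]; ring


lemma my_holder {g h : ℝ → ℝ} {u v p q : ℝ} (huv : u ≤ v)
    (hpq : Real.HolderConjugate p q)
    (hg : AEStronglyMeasurable g (volume.restrict (Ioc u v)))
    (hh : AEStronglyMeasurable h (volume.restrict (Ioc u v)))
    (Mg Mh : ℝ) (hgb : ∀ x ∈ Ioc u v, |g x| ≤ Mg) (hhb : ∀ x ∈ Ioc u v, |h x| ≤ Mh) :
    |∫ x in u..v, g x * h x|
      ≤ (∫ x in u..v, |g x| ^ p) ^ (1/p) * (∫ x in u..v, |h x| ^ q) ^ (1/q) := by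
  haveI : IsFiniteMeasure (volume.restrict (Ioc u v)) :=
    ⟨by rw [Measure.restrict_apply_univ]; exact measure_Ioc_lt_top⟩
  have hgm : MemLp g (ENNReal.ofReal p) (volume.restrict (Ioc u v)) := by
    refine (memLp_top_of_bound hg Mg ?_).mono_exponent le_top
    exact (ae_restrict_iff' measurableSet_Ioc).2 (ae_of_all _ hgb)
  have hhm : MemLp h (ENNReal.ofReal q) (volume.restrict (Ioc u v)) := by
    refine (memLp_top_of_bound hh Mh ?_).mono_exponent le_top
    exact (ae_restrict_iff' measurableSet_Ioc).2 (ae_of_all _ hhb)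
  have key := integral_mul_norm_le_Lp_mul_Lq (μ := volume.restrict (Ioc u v)) hpq hgm hhm
  simp only [Real.norm_eq_abs] at key
  rw [intervalIntegral.integral_of_le huv, intervalIntegral.integral_of_le huv,
    intervalIntegral.integral_of_le huv]
  calc |∫ x in Ioc u v, g x * h x|
      ≤ ∫ x in Ioc u v, |g x| * |h x| := by
        simpa [Real.norm_eq_abs, abs_mul] using
          norm_integral_le_integral_norm (μ := volume.restrict (Ioc u v)) (fun x => g x * h x)
    _ ≤ _ := key


theorem stmt15 (f : ℝ → ℝ) (a b p q : ℝ) (hab : a < b) (hq : 1 < q)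
    (hp : p = q / (q - 1))
    (hf : ∀ x ∈ Set.Icc a b, DifferentiableAt ℝ f x)
    (hint : IntervalIntegrable (deriv f) volume a b)
    (hconv : ConvexOn ℝ (Set.Icc a b) (fun x => |deriv f x| ^ q)) :
    |(1/6) * (f a + 4 * f ((a + b) / 2) + f b) - (1 / (b - a)) * ∫ x in a..b, f x|
      ≤ ((b - a) / 12) * ((1 + 2 ^ (p + 1)) / (3 * (p + 1))) ^ (1 / p) *
        (((|deriv f ((a + b) / 2)| ^ q + |deriv f a| ^ q) / 2) ^ (1 / q)
          + ((|deriv f ((a + b) / 2)| ^ q + |deriv f b| ^ q) / 2) ^ (1 / q)) := by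
  have hd : (0:ℝ) < b - a := by linarith
  have hq0 : (0:ℝ) < q := by linarith
  have hqm : (0:ℝ) < q - 1 := by linarith
  have hp1 : 1 < p := by rw [hp, lt_div_iff₀ hqm]; linarith
  have hp0 : (0:ℝ) < p := by linarith
  have hconj : Real.HolderConjugate p q := by
    refine Real.holderConjugate_iff.2 ⟨hp1, ?_⟩
    rw [hp]
    field_simp
    ring
  have hinv : 1/q = 1 - 1/p := by
    have := hconj.inv_add_inv_eq_one
    rw [one_div, one_div]; linarith
  set m : ℝ := (a + b) / 2 with hm
  set c1 : ℝ := (5*a + b) / 6 with hc1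
  set c2 : ℝ := (a + 5*b) / 6 with hc2
  have ham : a < m := by rw [hm]; linarith
  have hmb : m < b := by rw [hm]; linarith
  -- continuity and integrability of f
  have hfc : ContinuousOn f (Icc a b) := fun x hx => (hf x hx).continuousAt.continuousWithinAt
  have hsub1 : Set.uIcc a m ⊆ Icc a b := by
    rw [uIcc_of_le ham.le]; exact Icc_subset_Icc le_rfl hmb.le
  have hsub2 : Set.uIcc m b ⊆ Icc a b := by
    rw [uIcc_of_le hmb.le]; exact Icc_subset_Icc ham.le le_rfl
  have hfint1 : IntervalIntegrable f volume a m := (hfc.mono hsub1).intervalIntegrable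
  have hfint2 : IntervalIntegrable f volume m b := (hfc.mono hsub2).intervalIntegrable
  have hint1 : IntervalIntegrable (deriv f) volume a m :=
    hint.mono_set (by rwa [uIcc_of_le hab.le])
  have hint2 : IntervalIntegrable (deriv f) volume m b :=
    hint.mono_set (by rwa [uIcc_of_le hab.le])
  -- integration by parts on each half
  have ibp1 : ∫ x in a..m, (x - c1) * deriv f x
      = (m - c1) * f m - (a - c1) * f a - ∫ x in a..m, f x := by
    have := intervalIntegral.integral_mul_deriv_eq_deriv_mul
      (u := fun x => x - c1) (u' := fun _ => (1:ℝ)) (v := f) (v' := deriv f)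
      (fun x _ => (hasDerivAt_id x).sub_const c1)
      (fun x hx => (hf x (hsub1 hx)).hasDerivAt)
      intervalIntegrable_const hint1
    simpa using this
  have ibp2 : ∫ x in m..b, (x - c2) * deriv f x
      = (b - c2) * f b - (m - c2) * f m - ∫ x in m..b, f x := by
    have := intervalIntegral.integral_mul_deriv_eq_deriv_mul
      (u := fun x => x - c2) (u' := fun _ => (1:ℝ)) (v := f) (v' := deriv f)
      (fun x _ => (hasDerivAt_id x).sub_const c2)
      (fun x hx => (hf x (hsub2 hx)).hasDerivAt)
      intervalIntegrable_const hint2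
    simpa using this
  have hsum : ∫ x in a..b, f x = (∫ x in a..m, f x) + ∫ x in m..b, f x :=
    (integral_add_adjacent_intervals hfint1 hfint2).symm
  have hiden : (1/6) * (f a + 4 * f m + f b) - (1 / (b - a)) * ∫ x in a..b, f x
      = (1/(b-a)) * ((∫ x in a..m, (x - c1) * deriv f x) + ∫ x in m..b, (x - c2) * deriv f x) := by
    rw [ibp1, ibp2, hsum, hm, hc1, hc2]
    field_simp
    ring
  -- pointwise bounds on deriv f via convexity
  set g : ℝ → ℝ := fun x => |deriv f x| ^ q with hg
  set M0 : ℝ := max (g a) (g b) with hM0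
  have hgle : ∀ x ∈ Icc a b, g x ≤ M0 := by
    intro x hx
    rw [← segment_eq_Icc hab.le] at hx
    exact hconv.le_on_segment (left_mem_Icc.2 hab.le) (right_mem_Icc.2 hab.le) hx
  have hgnn : ∀ x, 0 ≤ g x := fun x => Real.rpow_nonneg (abs_nonneg _) _
  have hM0nn : 0 ≤ M0 := le_trans (hgnn a) (le_max_left _ _)
  have hder_bd : ∀ x ∈ Icc a b, |deriv f x| ≤ M0 ^ (1/q) := by
    intro x hx
    have h1 : |deriv f x| = (g x) ^ (1/q) := by
      rw [hg, one_div, Real.rpow_rpow_inv (abs_nonneg _) hq0.ne']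
    rw [h1]
    exact Real.rpow_le_rpow (hgnn x) (hgle x hx) (by positivity)
  -- measurability
  have hdmeas : ∀ s : Set ℝ, AEStronglyMeasurable (deriv f) (volume.restrict s) :=
    fun s => (measurable_deriv f).aestronglyMeasurable.restrict
  have hkmeas : ∀ (c : ℝ) (s : Set ℝ),
      AEStronglyMeasurable (fun x : ℝ => x - c) (volume.restrict s) :=
    fun c s => (continuous_id.sub continuous_const).aestronglyMeasurable.restrict
  -- Hölder on each half
  have hH1 : |∫ x in a..m, (x - c1) * deriv f x| ≤ (∫ x in a..m, |x - c1| ^ p) ^ (1/p) * (∫ x in a..m, |deriv f x| ^ q) ^ (1/q) := by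
    refine my_holder ham.le hconj (hkmeas c1 _) (hdmeas _) (b - a) (M0 ^ (1/q)) ?_ ?_
    · intro x hx
      have h1 := hx.1
      have h2 := hx.2
      have hc1' : c1 = (5*a+b)/6 := hc1
      have hm' : m = (a+b)/2 := hm
      rw [abs_le]
      constructor <;> linarith
    · intro x hx
      exact hder_bd x ⟨hx.1.le, le_trans hx.2 hmb.le⟩
  have hH2 : |∫ x in m..b, (x - c2) * deriv f x|
      ≤ (∫ x in m..b, |x - c2| ^ p) ^ (1/p) * (∫ x in m..b, |deriv f x| ^ q) ^ (1/q) := by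
    refine my_holder hmb.le hconj (hkmeas c2 _) (hdmeas _) (b - a) (M0 ^ (1/q)) ?_ ?_
    · intro x hx
      have h1 := hx.1
      have h2 := hx.2
      have hc2' : c2 = (a+5*b)/6 := hc2
      have hm' : m = (a+b)/2 := hm
      rw [abs_le]
      constructor <;> linarith
    · intro x hx
      exact hder_bd x ⟨le_trans ham.le hx.1.le, hx.2⟩
  -- kernel integral values
  set V : ℝ := (((b-a)/6) ^ (p+1) + ((b-a)/3) ^ (p+1)) / (p+1) with hV
  have hK1 : ∫ x in a..m, |x - c1| ^ p = V := by
    rw [my_kernel_int (by rw [hc1]; linarith) (by rw [hc1, hm]; linarith) hp0,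
      show c1 - a = (b-a)/6 by rw [hc1]; ring,
      show m - c1 = (b-a)/3 by rw [hm, hc1]; ring]
  have hK2 : ∫ x in m..b, |x - c2| ^ p = V := by
    rw [my_kernel_int (by rw [hc2, hm]; linarith) (by rw [hc2]; linarith) hp0,
      show c2 - m = (b-a)/3 by rw [hm, hc2]; ring,
      show b - c2 = (b-a)/6 by rw [hc2]; ring, add_comm]
  -- integrability of g and trapezoid bounds
  have hgmeas : Measurable g :=
    ((continuous_abs.rpow_const (fun y => Or.inr hq0.le)).measurable).comp (measurable_deriv f)
  have hgint : ∀ u v : ℝ, a ≤ u → u ≤ v → v ≤ b → IntervalIntegrable g volume u v := by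
    intro u v hau huv hvb
    rw [intervalIntegrable_iff_integrableOn_Ioc_of_le huv]
    refine Measure.integrableOn_of_bounded (M := M0) (by exact (measure_Ioc_lt_top).ne)
      hgmeas.aestronglyMeasurable ?_
    refine (ae_restrict_iff' measurableSet_Ioc).2 (ae_of_all _ fun x hx => ?_)
    rw [Real.norm_eq_abs, abs_of_nonneg (hgnn x)]
    exact hgle x ⟨le_trans hau hx.1.le, le_trans hx.2 hvb⟩
  have htr1 : (∫ x in a..m, |deriv f x| ^ q) ^ (1/q)
      ≤ ((b-a)/2) ^ (1/q) * ((g m + g a) / 2) ^ (1/q) := by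
    rw [← Real.mul_rpow (by linarith) (by positivity)]
    refine Real.rpow_le_rpow
      (intervalIntegral.integral_nonneg ham.le fun x _ => hgnn x) ?_ (by positivity)
    have := my_trapezoid ham (hconv.subset (Icc_subset_Icc le_rfl hmb.le) (convex_Icc a m))
      (hgint a m le_rfl ham.le hmb.le)
    calc ∫ x in a..m, |deriv f x| ^ q ≤ (m - a) * ((g a + g m) / 2) := this
      _ = (b-a)/2 * ((g m + g a) / 2) := by rw [hm]; ring
  have htr2 : (∫ x in m..b, |deriv f x| ^ q) ^ (1/q)
      ≤ ((b-a)/2) ^ (1/q) * ((g m + g b) / 2) ^ (1/q) := by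
    rw [← Real.mul_rpow (by linarith) (by positivity)]
    refine Real.rpow_le_rpow
      (intervalIntegral.integral_nonneg hmb.le fun x _ => hgnn x) ?_ (by positivity)
    have := my_trapezoid hmb (hconv.subset (Icc_subset_Icc ham.le le_rfl) (convex_Icc m b))
      (hgint m b ham.le hmb.le le_rfl)
    calc ∫ x in m..b, |deriv f x| ^ q ≤ (b - m) * ((g m + g b) / 2) := this
      _ = (b-a)/2 * ((g m + g b) / 2) := by rw [hm]; ring
  -- nonnegativity facts
  have hVnn : 0 ≤ V := by
    rw [hV]
    positivity
  -- the scalar identity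
  have hscalar : (1/(b-a)) * (V ^ (1/p) * ((b-a)/2) ^ (1/q))
      = ((b - a) / 12) * ((1 + 2 ^ (p + 1)) / (3 * (p + 1))) ^ (1 / p) := by
    have hx6 : (0:ℝ) < (b-a)/6 := by linarith
    have hx2 : (0:ℝ) < (b-a)/2 := by linarith
    have hVeq : V = ((b-a)/6) ^ (p+1) * ((1 + 2 ^ (p+1)) / (p+1)) := by
      rw [hV, show (b-a)/3 = 2 * ((b-a)/6) by ring,
        Real.mul_rpow (by norm_num) hx6.le]
      field_simp
    have h1 : V ^ (1/p) = ((b-a)/6) * (((b-a)/6) ^ (1/p) * ((1 + 2 ^ (p+1)) / (p+1)) ^ (1/p)) := by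
      rw [hVeq, Real.mul_rpow (by positivity) (by positivity),
        ← Real.rpow_mul hx6.le, show (p+1) * (1/p) = 1 + 1/p by field_simp,
        Real.rpow_add hx6, Real.rpow_one]
      ring
    have h2 : ((b-a)/2) ^ (1/q) = ((b-a)/2) / ((b-a)/2) ^ (1/p) := by
      rw [hinv, Real.rpow_sub hx2, Real.rpow_one]
    have h3 : ((b-a)/6) ^ (1/p) / ((b-a)/2) ^ (1/p) = (1/3 : ℝ) ^ (1/p) := by
      rw [← Real.div_rpow hx6.le hx2.le,
        show ((b-a)/6) / ((b-a)/2) = 1/3 by field_simp; ring]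
    have h4 : (1/3 : ℝ) ^ (1/p) * ((1 + 2 ^ (p+1)) / (p+1)) ^ (1/p)
        = ((1 + 2 ^ (p + 1)) / (3 * (p + 1))) ^ (1/p) := by
      rw [← Real.mul_rpow (by norm_num) (by positivity)]
      congr 1
      have hp1' : p + 1 ≠ 0 := by positivity
      field_simp
    have hB : (0:ℝ) < ((b-a)/2) ^ (1/p) := Real.rpow_pos_of_pos hx2 _
    rw [h1, h2, ← h4, ← h3]
    field_simp
    ring
  -- combine everything
  have hb1 : |∫ x in a..m, (x - c1) * deriv f x|
      ≤ V ^ (1/p) * (((b-a)/2) ^ (1/q) * ((g m + g a)/2) ^ (1/q)) := by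
    refine le_trans hH1 ?_
    rw [hK1]
    exact mul_le_mul_of_nonneg_left htr1 (Real.rpow_nonneg hVnn _)
  have hb2 : |∫ x in m..b, (x - c2) * deriv f x|
      ≤ V ^ (1/p) * (((b-a)/2) ^ (1/q) * ((g m + g b)/2) ^ (1/q)) := by
    refine le_trans hH2 ?_
    rw [hK2]
    exact mul_le_mul_of_nonneg_left htr2 (Real.rpow_nonneg hVnn _)
  have h0 : (0:ℝ) ≤ 1/(b-a) := by positivity
  calc |(1/6) * (f a + 4 * f m + f b) - (1 / (b-a)) * ∫ x in a..b, f x|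
      = (1/(b-a)) * |(∫ x in a..m, (x - c1) * deriv f x)
          + ∫ x in m..b, (x - c2) * deriv f x| := by
        rw [hiden, abs_mul, abs_of_pos (by positivity)]
    _ ≤ (1/(b-a)) * (|∫ x in a..m, (x - c1) * deriv f x|
          + |∫ x in m..b, (x - c2) * deriv f x|) :=
        mul_le_mul_of_nonneg_left (abs_add_le _ _) h0
    _ ≤ (1/(b-a)) * ((V ^ (1/p) * (((b-a)/2) ^ (1/q) * ((g m + g a)/2) ^ (1/q)))
          + (V ^ (1/p) * (((b-a)/2) ^ (1/q) * ((g m + g b)/2) ^ (1/q)))) :=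
        mul_le_mul_of_nonneg_left (add_le_add hb1 hb2) h0
    _ = ((1/(b-a)) * (V ^ (1/p) * ((b-a)/2) ^ (1/q)))
          * (((g m + g a)/2) ^ (1/q) + ((g m + g b)/2) ^ (1/q)) := by ring
    _ = ((b - a) / 12) * ((1 + 2 ^ (p + 1)) / (3 * (p + 1))) ^ (1 / p)
          * (((g m + g a)/2) ^ (1/q) + ((g m + g b)/2) ^ (1/q)) := by rw [hscalar]
    _ = _ := by simp only [hg]
end
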